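/- Let n be even and let x satisfy 6 ≤ x ≤ n-4 . Then the sequence d = (n-1, n-1, n-1, x, …, x, 3, 3, 3) of length n (with n-6 copies of x) is graphic. -/

import Mathlib

open Finset

namespace SeqK3Aux

/-- Connection set (in ℕ) for a `k`-regular circulant graph on `m` vertices. -/
def T (m k : ℕ) : Finset ℕ :=
  (Finset.Icc 1 (k / 2) ∪ Finset.Icc (m - k / 2) (m - 1)) ∪
    (if k % 2 = 1 then {m / 2} else ∅)

lemma mem_T_iff {m k a : ℕ} : a ∈ T m k ↔
    ((1 ≤ a ∧ a ≤ k / 2) ∨ (m - k / 2 ≤ a ∧ a ≤ m - 1)) ∨ (k % 2 = 1 ∧ a = m / 2) := by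
  unfold T
  by_cases h : k % 2 = 1 <;> simp [h, Finset.mem_union, Finset.mem_Icc] <;> tauto

lemma mem_T_bounds {m k a : ℕ} (hme : Even m) (hm : 4 ≤ m) (hk : 3 ≤ k) (hkm : k ≤ m - 1)
    (ha : a ∈ T m k) : 1 ≤ a ∧ a ≤ m - 1 := by
  obtain ⟨p, hp⟩ := hme
  rw [mem_T_iff] at ha
  omega

lemma mem_T_sub {m k a : ℕ} (hme : Even m) (hm : 4 ≤ m) (hk : 3 ≤ k) (hkm : k ≤ m - 1)
    (ha : a ∈ T m k) : m - a ∈ T m k := by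
  obtain ⟨p, hp⟩ := hme
  rw [mem_T_iff] at ha ⊢
  omega

lemma card_T {m k : ℕ} (hme : Even m) (hm : 4 ≤ m) (hk : 3 ≤ k) (hkm : k ≤ m - 1) :
    (T m k).card = k := by
  obtain ⟨p, hp⟩ := hme
  unfold T
  rw [Finset.card_union_of_disjoint, Finset.card_union_of_disjoint]
  · rw [Nat.card_Icc, Nat.card_Icc]
    by_cases h : k % 2 = 1 <;> simp [h] <;> omega
  · rw [Finset.disjoint_left]
    intro a ha hb
    rw [Finset.mem_Icc] at ha hb
    omega
  · rw [Finset.disjoint_left]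
    intro a ha hb
    by_cases h : k % 2 = 1 <;> simp [h, Finset.mem_union, Finset.mem_Icc] at ha hb <;> omega

/-- Connection set in `ZMod m`. -/
def S (m k : ℕ) : Finset (ZMod m) := (T m k).image (Nat.cast)

section
variable {m k : ℕ} (hme : Even m) (hm : 4 ≤ m) (hk : 3 ≤ k) (hkm : k ≤ m - 1)
include hme hm hk hkm

lemma card_S : (S m k).card = k := by
  haveI : NeZero m := ⟨by omega⟩
  rw [S, Finset.card_image_of_injOn, card_T hme hm hk hkm]
  intro a ha b hb hab
  have ha' := mem_T_bounds hme hm hk hkm ha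
  have hb' := mem_T_bounds hme hm hk hkm hb
  have h1 : ((a : ZMod m)).val = a := ZMod.val_cast_of_lt (by omega)
  have h2 : ((b : ZMod m)).val = b := ZMod.val_cast_of_lt (by omega)
  rw [← h1, ← h2, hab]

lemma zero_not_mem_S : (0 : ZMod m) ∉ S m k := by
  haveI : NeZero m := ⟨by omega⟩
  rw [S, Finset.mem_image]
  rintro ⟨a, ha, ha0⟩
  have ha' := mem_T_bounds hme hm hk hkm ha
  have h1 : ((a : ZMod m)).val = a := ZMod.val_cast_of_lt (by omega)
  rw [ha0, ZMod.val_zero] at h1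
  omega

lemma neg_mem_S {s : ZMod m} (hs : s ∈ S m k) : -s ∈ S m k := by
  rw [S, Finset.mem_image] at hs ⊢
  obtain ⟨a, ha, rfl⟩ := hs
  have ha' := mem_T_bounds hme hm hk hkm ha
  refine ⟨m - a, mem_T_sub hme hm hk hkm ha, ?_⟩
  have : ((m - a : ℕ) : ZMod m) + (a : ZMod m) = ((m : ℕ) : ZMod m) := by
    rw [← Nat.cast_add]; congr 1; omega
  rw [ZMod.natCast_self] at this
  exact eq_neg_of_add_eq_zero_left this

end

/-- The adjacency relation on natural-number indices. -/
def Adj3 (n x : ℕ) (a b : ℕ) : Prop :=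
  a ≠ b ∧ (a < 3 ∨ b < 3 ∨
    (3 ≤ a ∧ 3 ≤ b ∧ a < n - 3 ∧ b < n - 3 ∧
      (((a - 3 : ℕ) : ZMod (n - 6)) - ((b - 3 : ℕ) : ZMod (n - 6)) ∈ S (n - 6) (x - 3) ∨
       ((b - 3 : ℕ) : ZMod (n - 6)) - ((a - 3 : ℕ) : ZMod (n - 6)) ∈ S (n - 6) (x - 3))))

instance (n x a b : ℕ) : Decidable (Adj3 n x a b) := by unfold Adj3; infer_instance

/-- The graph. -/
def G3 (n x N : ℕ) : SimpleGraph (Fin N) where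
  Adj i j := Adj3 n x i.val j.val
  symm := by
    refine ⟨fun i j (h : Adj3 n x i.val j.val) => (?_ : Adj3 n x j.val i.val)⟩
    unfold Adj3 at h ⊢
    tauto
  loopless := ⟨fun i (h : Adj3 n x i.val i.val) => h.1 rfl⟩

instance (n x N : ℕ) : DecidableRel (G3 n x N).Adj :=
  fun i j => inferInstanceAs (Decidable (Adj3 n x i.val j.val))

lemma G3_adj {n x N : ℕ} (i j : Fin N) : (G3 n x N).Adj i j ↔ Adj3 n x i.val j.val := Iff.rfl

lemma card_filter_val_lt (N c : ℕ) (h : c ≤ N) :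
    ((Finset.univ : Finset (Fin N)).filter fun j : Fin N => (j : ℕ) < c).card = c := by
  have : ((Finset.univ : Finset (Fin N)).filter fun j : Fin N => (j : ℕ) < c) =
      Finset.map (Fin.castLEEmb h) Finset.univ := by
    ext j
    simp only [Finset.mem_filter, Finset.mem_univ, true_and, Finset.mem_map,
      Fin.castLEEmb, Function.Embedding.coeFn_mk]
    constructor
    · intro hj
      exact ⟨⟨j.val, hj⟩, Fin.ext rfl⟩
    · rintro ⟨a, rfl⟩
      simpa using a.isLt
  rw [this, Finset.card_map, Finset.card_univ, Fintype.card_fin]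

lemma card_middle {m : ℕ} [NeZero m] {N n : ℕ} (hN : N = n) (hm : m = n - 6) (hn : 10 ≤ n)
    (a : ZMod m) (S' : Finset (ZMod m)) :
    ((Finset.univ : Finset (Fin N)).filter fun j : Fin N =>
      3 ≤ (j : ℕ) ∧ (j : ℕ) < n - 3 ∧ a - (((j : ℕ) - 3 : ℕ) : ZMod m) ∈ S').card = S'.card := by
  have hval : ∀ b : ZMod m, b.val < m := fun b => ZMod.val_lt b
  refine Finset.card_bij' (fun j _ => a - (((j : ℕ) - 3 : ℕ) : ZMod m))
    (fun s _ => (⟨3 + (a - s).val, by have := hval (a - s); omega⟩ : Fin N)) ?_ ?_ ?_ ?_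
  · intro j hj
    exact (Finset.mem_filter.mp hj).2.2.2
  · intro s hs
    rw [Finset.mem_filter]
    refine ⟨Finset.mem_univ _, by simp, ?_, ?_⟩
    · have := hval (a - s); simp; omega
    · have h1 : (3 + (a - s).val - 3 : ℕ) = (a - s).val := by omega
      simp only [h1]
      rw [ZMod.natCast_rightInverse (a - s)]
      simpa using hs
  · intro j hj
    obtain ⟨-, h3, hlt, -⟩ := Finset.mem_filter.mp hj
    apply Fin.ext
    have hlt' : (j : ℕ) - 3 < m := by omega
    have h1 : (a - (a - (((j : ℕ) - 3 : ℕ) : ZMod m))) = (((j : ℕ) - 3 : ℕ) : ZMod m) := by ring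
    simp only [h1, ZMod.val_cast_of_lt hlt']
    omega
  · intro s hs
    have h1 : (3 + (a - s).val - 3 : ℕ) = (a - s).val := by omega
    simp only [h1]
    rw [ZMod.natCast_rightInverse (a - s)]
    ring

theorem G3_degree {n x N : ℕ} (hn : Even n) (hx1 : 6 ≤ x) (hx2 : x ≤ n - 4) (hN : N = n)
    (i : Fin N) :
    (G3 n x N).degree i =
      if (i : ℕ) < 3 then n - 1 else if (i : ℕ) < n - 3 then x else 3 := by
  have hn10 : 10 ≤ n := by omega
  set m := n - 6 with hm
  haveI : NeZero m := ⟨by omega⟩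
  have hme : Even m := by obtain ⟨p, hp⟩ := hn; exact ⟨p - 3, by omega⟩
  have hm4 : 4 ≤ m := by omega
  have hk3 : 3 ≤ x - 3 := by omega
  have hkm : x - 3 ≤ m - 1 := by omega
  rw [SimpleGraph.degree, SimpleGraph.neighborFinset_eq_filter]
  by_cases h3 : (i : ℕ) < 3
  · rw [if_pos h3]
    have : (Finset.univ.filter fun w => (G3 n x N).Adj i w) = Finset.univ.erase i := by
      ext j
      simp only [Finset.mem_filter, Finset.mem_univ, true_and, Finset.mem_erase, G3_adj, Adj3]
      constructor
      · rintro ⟨hne, -⟩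
        exact ⟨fun h => hne (congrArg Fin.val h.symm), trivial⟩
      · rintro ⟨hne, -⟩
        exact ⟨fun h => hne (Fin.ext h).symm, Or.inl h3⟩
    rw [this, Finset.card_erase_of_mem (Finset.mem_univ i), Finset.card_univ, Fintype.card_fin,
      hN]
  · by_cases hmid : (i : ℕ) < n - 3
    · rw [if_neg h3, if_pos hmid]
      set a : ZMod m := (((i : ℕ) - 3 : ℕ) : ZMod m) with ha
      have hsplit : (Finset.univ.filter fun w => (G3 n x N).Adj i w) =
          (Finset.univ.filter fun j : Fin N => (j : ℕ) < 3) ∪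
          (Finset.univ.filter fun j : Fin N =>
            3 ≤ (j : ℕ) ∧ (j : ℕ) < n - 3 ∧ a - (((j : ℕ) - 3 : ℕ) : ZMod m) ∈ S m (x - 3)) := by
        ext j
        simp only [Finset.mem_filter, Finset.mem_univ, true_and, Finset.mem_union, G3_adj, Adj3]
        constructor
        · rintro ⟨hne, hadj⟩
          rcases hadj with h | h | ⟨hi3, hj3, hin, hjn, hd⟩
          · omega
          · exact Or.inl h
          · refine Or.inr ⟨hj3, hjn, ?_⟩
            rcases hd with hd | hd
            · exact hd
            · have := neg_mem_S hme hm4 hk3 hkm hd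
              rw [neg_sub] at this
              exact this
        · rintro (h | ⟨hj3, hjn, hd⟩)
          · exact ⟨by omega, Or.inr (Or.inl h)⟩
          · have hne : (i : ℕ) ≠ (j : ℕ) := by
              intro h
              apply zero_not_mem_S hme hm4 hk3 hkm
              have h0 : a - (((j : ℕ) - 3 : ℕ) : ZMod m) = 0 := by rw [ha, h, sub_self]
              rwa [h0] at hd
            exact ⟨hne, Or.inr (Or.inr ⟨by omega, hj3, hmid, hjn, Or.inl hd⟩)⟩
      rw [hsplit, Finset.card_union_of_disjoint]
      · rw [card_filter_val_lt N 3 (by omega), card_middle hN hm hn10 a (S m (x - 3)),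
          card_S hme hm4 hk3 hkm]
        omega
      · rw [Finset.disjoint_left]
        intro j hj hj2
        rw [Finset.mem_filter] at hj hj2
        omega
    · rw [if_neg h3, if_neg hmid]
      have : (Finset.univ.filter fun w => (G3 n x N).Adj i w) =
          (Finset.univ.filter fun j : Fin N => (j : ℕ) < 3) := by
        ext j
        simp only [Finset.mem_filter, Finset.mem_univ, true_and, G3_adj, Adj3]
        constructor
        · rintro ⟨hne, hadj⟩
          rcases hadj with h | h | ⟨hi3, hj3, hin, hjn, hd⟩ <;> omega
        · intro hj
          exact ⟨by omega, Or.inr (Or.inl hj)⟩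
      rw [this, card_filter_val_lt N 3 (by omega)]

end SeqK3Aux

/-- A finite list of naturals is graphic if it is realized as the degree sequence of a
simple graph. -/
def IsGraphicList (l : List ℕ) : Prop :=
  ∃ (G : SimpleGraph (Fin l.length)) (_ : DecidableRel G.Adj), ∀ i, G.degree i = l.get i

/-- For even `n` and `6 ≤ x ≤ n-4`, the sequence `(n-1, n-1, n-1, x, …, x, 3, 3, 3)`
of length `n` (with `n-6` copies of `x`) is graphic. -/
theorem seq_k3_graphic {n x : ℕ} (hn : Even n) (hx1 : 6 ≤ x) (hx2 : x ≤ n - 4) :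
    IsGraphicList ([n - 1, n - 1, n - 1] ++ List.replicate (n - 6) x ++ [3, 3, 3]) := by
  have hn10 : 10 ≤ n := by omega
  set l : List ℕ := [n - 1, n - 1, n - 1] ++ List.replicate (n - 6) x ++ [3, 3, 3] with hl
  have hlen : l.length = n := by
    simp [hl]
    omega
  refine ⟨SeqK3Aux.G3 n x l.length, inferInstance, ?_⟩
  intro i
  rw [SeqK3Aux.G3_degree hn hx1 hx2 hlen i]
  have hget : l.get i = l[(i : ℕ)]'i.isLt := rfl
  have hrepl : l = List.replicate 3 (n - 1) ++ List.replicate (n - 6) x ++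
      List.replicate 3 3 := by
    rw [hl]; rfl
  have hiv : (i : ℕ) < n := by rw [← hlen]; exact i.isLt
  rw [hget]
  simp only [hrepl, List.getElem_append, List.getElem_replicate, List.length_append,
    List.length_replicate]
  all_goals first
  | omega
  | (split_ifs <;> omega)
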